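/- arXiv:2005.00780 — 3 statements merged into one kernel-verified Lean document; each statement's English description precedes it below -/
import Mathlib

section
/- Let Z be a power series distributed random variable with pmf p_k = a_k θ^k / γ(θ), and let f : ℤ₊ → ℝ be bounded. Define g(k) = (1/(k a_k θ^k)) Σ_{j=0}^{k-1} a_j θ^j (f(j) - E f(Z)) for k ≥ 1 and g(0) = 0. Then g satisfies the Stein equation θ(k+1)(a_{k+1}/a_k) g(k+1) - k g(k) = f(k) - E f(Z) for all k ∈ ℤ₊, and moreover g(k) = -(1/(k a_k θ^k)) Σ_{j=k}^∞ a_j θ^j (f(j) - E f(Z)). -/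
/-- Solution of the Stein equation for the power series distribution: with
`p k = a k θ^k / γ`, `μ = E f(Z)`, and
`g k = (1/(k a_k θ^k)) ∑_{j=0}^{k-1} a_j θ^j (f j - μ)` (with `g 0 = 0`),
`g` satisfies `θ (k+1) (a (k+1)/a k) g (k+1) - k g k = f k - μ` for all `k`,
and also `g k = -(1/(k a_k θ^k)) ∑_{j=k}^∞ a_j θ^j (f j - μ)`. -/
theorem psd_stein_solution (a : ℕ → ℝ) (θ γ : ℝ) (p : ℕ → ℝ)
    (hθ : 0 < θ) (ha : ∀ k, 0 < a k)
    (hγ : HasSum (fun k => a k * θ ^ k) γ) (hγ0 : 0 < γ)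
    (hp : ∀ k, p k = a k * θ ^ k / γ)
    (f : ℕ → ℝ) (hfbdd : ∃ M, ∀ k, |f k| ≤ M)
    (μ : ℝ) (hμ : HasSum (fun k => p k * f k) μ)
    (g : ℕ → ℝ) (hg0 : g 0 = 0)
    (hg : ∀ k : ℕ, 1 ≤ k → g k =
      (1 / ((k : ℝ) * a k * θ ^ k)) *
        ∑ j ∈ Finset.range k, a j * θ ^ j * (f j - μ)) :
    (∀ k : ℕ,
      θ * (k + 1 : ℝ) * (a (k + 1) / a k) * g (k + 1) - (k : ℝ) * g k = f k - μ) ∧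
    (∀ k : ℕ, 1 ≤ k → g k =
      -(1 / ((k : ℝ) * a k * θ ^ k)) *
        ∑' j : ℕ, if k ≤ j then a j * θ ^ j * (f j - μ) else 0) := by
  have hθ0 : θ ≠ 0 := hθ.ne'
  have hγ' : γ ≠ 0 := hγ0.ne'
  have hsum0 : HasSum (fun j => a j * θ ^ j * (f j - μ)) 0 := by
    have h1 : HasSum (fun j => a j * θ ^ j * f j) (γ * μ) := by
      have heq : (fun j => a j * θ ^ j * f j) = fun j => γ * (p j * f j) := by
        funext j; rw [hp]; field_simp
      rw [heq]; exact hμ.mul_left γ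
    have h2 : HasSum (fun j => a j * θ ^ j * μ) (γ * μ) := hγ.mul_right μ
    have := h1.sub h2
    simpa [mul_sub, sub_self] using this
  have tail : ∀ k : ℕ, (∑' j : ℕ, if k ≤ j then a j * θ ^ j * (f j - μ) else 0)
      = -∑ j ∈ Finset.range k, a j * θ ^ j * (f j - μ) := by
    intro k
    have hfin : HasSum (fun j => if j < k then a j * θ ^ j * (f j - μ) else 0)
        (∑ j ∈ Finset.range k, a j * θ ^ j * (f j - μ)) := by
      have h := hasSum_sum_of_ne_finset_zero (L := SummationFilter.unconditional ℕ) (s := Finset.range k)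
        (f := fun j => if j < k then a j * θ ^ j * (f j - μ) else 0)
        (by intro b hb; simp [Finset.mem_range] at hb; simp [hb])
      have : ∑ j ∈ Finset.range k, (if j < k then a j * θ ^ j * (f j - μ) else 0)
          = ∑ j ∈ Finset.range k, a j * θ ^ j * (f j - μ) := by
        apply Finset.sum_congr rfl
        intro j hj
        simp [Finset.mem_range.mp hj]
      rwa [this] at h
    have htail : HasSum (fun j => if k ≤ j then a j * θ ^ j * (f j - μ) else 0)
        (0 - ∑ j ∈ Finset.range k, a j * θ ^ j * (f j - μ)) := by
      have := hsum0.sub hfin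
      convert this using 1
      · rfl
      funext j
      by_cases hj : k ≤ j
      · simp [hj, Nat.not_lt.mpr hj]
      · simp [hj, Nat.lt_of_not_le hj]
    rw [htail.tsum_eq, zero_sub]
  constructor
  · intro k
    rcases Nat.eq_zero_or_pos k with rfl | hk
    · have hg1 := hg 1 le_rfl
      simp only [Finset.sum_range_one, pow_zero, pow_one, Nat.cast_one, one_mul] at hg1
      rw [hg1, hg0]
      have h0 := (ha 0).ne'
      have h1 := (ha 1).ne'
      field_simp
      ring
    · have hk0 : (k : ℝ) ≠ 0 := Nat.cast_ne_zero.mpr (by omega)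
      have hak := (ha k).ne'
      have hak1 := (ha (k + 1)).ne'
      have hpk : θ ^ k ≠ 0 := pow_ne_zero _ hθ0
      have hgk := hg k hk
      have hgk1 := hg (k + 1) (by omega)
      rw [Finset.sum_range_succ] at hgk1
      rw [hgk, hgk1]
      push_cast
      field_simp
      ring
  · intro k hk
    rw [hg k hk, tail k]
    ring
end

section
/- Let Z be a power series distributed random variable with pmf p_k, cumulative distribution F(k) = Σ_{i=0}^k p_i and survival function F̄(k) = Σ_{i=k}^∞ p_i. If k·F(k)/F(k-1) ≥ θ(k+1)a_{k+1}/a_k ≥ k·F̄(k+1)/F̄(k) for all k ≥ 1, then the solution g_f of the Stein equation satisfies sup over f: ℤ₊ → [0,1] of |Δg_f(k)| equals (a_k/(θ(k+1)a_{k+1})) F̄(k+1) + (1/k) F(k-1), and consequently sup_f |Δg_f(k)| ≤ min{1/k, a_k/(θ(k+1)a_{k+1})}. -/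
set_option maxHeartbeats 1000000

lemma hasSum_ite_tail (g : ℕ → ℝ) {s : ℝ} (h : HasSum g s) (m : ℕ) :
    HasSum (fun i => if m ≤ i then g i else 0) (s - ∑ i ∈ Finset.range m, g i) := by
  have h2 : HasSum (fun i => if m ≤ i then (0:ℝ) else g i) (∑ i ∈ Finset.range m, g i) := by
    have h2' := hasSum_sum_of_ne_finset_zero (f := fun i => if m ≤ i then (0:ℝ) else g i)
      (s := Finset.range m) (L := SummationFilter.unconditional ℕ) (by intro i hi; simp only [Finset.mem_range, not_lt] at hi; simp [hi])
    have he : ∑ b ∈ Finset.range m, (fun i => if m ≤ i then (0:ℝ) else g i) b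
        = ∑ i ∈ Finset.range m, g i :=
      Finset.sum_congr rfl (fun i hi => by simp [Nat.not_le.mpr (Finset.mem_range.mp hi)])
    rwa [he] at h2'
  have h3 : (fun i => if m ≤ i then g i else 0)
      = fun i => g i - (if m ≤ i then (0:ℝ) else g i) := by
    funext i; by_cases hmi : m ≤ i <;> simp [hmi]
  rw [h3]; exact h.sub h2



/-- The solution of the PSD Stein equation for a test function `f`:
`g_f 0 = 0`, `g_f k = (1/(k a_k θ^k)) ∑_{j<k} a_j θ^j (f j - E f(Z))`. -/
noncomputable def psdSteinSol (a : ℕ → ℝ) (θ : ℝ) (p : ℕ → ℝ) (f : ℕ → ℝ) : ℕ → ℝ :=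
  fun k =>
    if k = 0 then 0
    else (1 / ((k : ℝ) * a k * θ ^ k)) *
      ∑ j ∈ Finset.range k, a j * θ ^ j * (f j - ∑' i : ℕ, p i * f i)

/-- Uniform and exact bounds on the forward difference of the PSD Stein solution:
under the monotonicity condition
`k F(k)/F(k-1) ≥ θ (k+1) a_{k+1}/a_k ≥ k F̄(k+1)/F̄(k)`,
the supremum over `f : ℕ → [0,1]` of `|Δ g_f (k)|` equals
`(a_k/(θ (k+1) a_{k+1})) F̄(k+1) + (1/k) F(k-1)`, and hence is at most
`min (1/k) (a_k/(θ (k+1) a_{k+1}))`. -/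
theorem psd_stein_factor_bound (a : ℕ → ℝ) (θ γ : ℝ) (p : ℕ → ℝ)
    (hθ : 0 < θ) (ha : ∀ k, 0 < a k)
    (hγ : HasSum (fun k => a k * θ ^ k) γ) (hγ0 : 0 < γ)
    (hp : ∀ k, p k = a k * θ ^ k / γ)
    (F Fbar : ℕ → ℝ)
    (hF : ∀ k, F k = ∑ i ∈ Finset.range (k + 1), p i)
    (hFbar : ∀ k, Fbar k = ∑' i : ℕ, if k ≤ i then p i else 0)
    (hmono : ∀ k : ℕ, 1 ≤ k →
      (k : ℝ) * F k / F (k - 1) ≥ θ * (k + 1 : ℝ) * (a (k + 1) / a k) ∧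
      θ * (k + 1 : ℝ) * (a (k + 1) / a k) ≥ (k : ℝ) * Fbar (k + 1) / Fbar k) :
    ∀ k : ℕ, 1 ≤ k →
      (⨆ f : {f : ℕ → ℝ // ∀ n, 0 ≤ f n ∧ f n ≤ 1},
          |psdSteinSol a θ p f.1 (k + 1) - psdSteinSol a θ p f.1 k|) =
        (a k / (θ * (k + 1 : ℝ) * a (k + 1))) * Fbar (k + 1) + (1 / (k : ℝ)) * F (k - 1) ∧
      (⨆ f : {f : ℕ → ℝ // ∀ n, 0 ≤ f n ∧ f n ≤ 1},
          |psdSteinSol a θ p f.1 (k + 1) - psdSteinSol a θ p f.1 k|) ≤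
        min (1 / (k : ℝ)) (a k / (θ * (k + 1 : ℝ) * a (k + 1))) := by
  intro k hk
  have hk0 : (1:ℝ) ≤ (k:ℝ) := by exact_mod_cast hk
  have hkpos : (0:ℝ) < (k:ℝ) := by linarith
  set q : ℕ → ℝ := fun j => a j * θ ^ j with hq_def
  have hqa : ∀ j, a j * θ ^ j = q j := fun j => rfl
  have hqpos : ∀ j, 0 < q j := fun j => mul_pos (ha j) (pow_pos hθ j)
  have hq : HasSum q γ := hγ
  have hqs : Summable q := hq.summable
  have hγne : γ ≠ 0 := ne_of_gt hγ0
  have hppos : ∀ i, 0 < p i := fun i => by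
    rw [hp]; exact div_pos (mul_pos (ha i) (pow_pos hθ i)) hγ0
  have hp1 : HasSum p 1 := by
    have h1 := hq.div_const γ
    rw [div_self hγne] at h1
    have he : (fun i => q i / γ) = p := by funext i; rw [hp]
    rwa [he] at h1
  have hps : Summable p := hp1.summable
  have hPQ : ∀ m, γ * ∑ i ∈ Finset.range m, p i = ∑ i ∈ Finset.range m, q i := by
    intro m
    rw [Finset.mul_sum]
    exact Finset.sum_congr rfl fun i _ => by rw [hp]; field_simp; simp only [hq_def]
  have hFbar_eq : ∀ m, Fbar m = 1 - ∑ i ∈ Finset.range m, p i := by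
    intro m; rw [hFbar]; exact (hasSum_ite_tail p hp1 m).tsum_eq
  have hFk1_eq : F (k-1) = ∑ i ∈ Finset.range k, p i := by
    rw [hF]; congr 2; omega
  set Q : ℝ := ∑ j ∈ Finset.range k, q j with hQ_def
  have hQγ : γ * F (k-1) = Q := by rw [hFk1_eq]; exact hPQ k
  have hQbar : γ * Fbar (k+1) = γ - Q - q k := by
    rw [hFbar_eq, mul_sub, mul_one, hPQ, Finset.sum_range_succ]; ring
  have hFbar_pos : ∀ m, 0 < Fbar m := by
    intro m
    rw [hFbar]
    have hsumm : Summable (fun i => if m ≤ i then p i else 0) :=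
      (hasSum_ite_tail p hp1 m).summable
    have hle := Summable.le_tsum hsumm m (fun j _ => by
      split
      · exact (hppos _).le
      · exact le_rfl)
    simp only [le_refl, if_pos] at hle
    exact lt_of_lt_of_le (hppos m) hle
  have hF_nonneg : ∀ m, 0 ≤ F m := fun m => by
    rw [hF]; exact Finset.sum_nonneg fun i _ => (hppos i).le
  have hFk1_pos : 0 < F (k-1) := by
    rw [hFk1_eq]
    exact Finset.sum_pos (fun i _ => hppos i)
      (Finset.nonempty_range_iff.mpr (by omega))
  -- constants
  set A : ℝ := 1 / (((k:ℝ)+1) * q (k+1)) with hA_def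
  set B : ℝ := 1 / ((k:ℝ) * q k) with hB_def
  set C : ℝ := A * Fbar (k+1) + B * F (k-1) with hC_def
  set V : ℝ := q k * C with hV_def
  have hDA_pos : (0:ℝ) < ((k:ℝ)+1) * q (k+1) := mul_pos (by linarith) (hqpos _)
  have hDB_pos : (0:ℝ) < (k:ℝ) * q k := mul_pos hkpos (hqpos _)
  have hA_pos : 0 < A := by rw [hA_def]; positivity
  have hB_pos : 0 < B := by rw [hB_def]; positivity
  obtain ⟨h1, h2⟩ := hmono k hk
  have h1' : θ * ((k:ℝ)+1) * a (k+1) * F (k-1) ≤ (k:ℝ) * F k * a k := by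
    rw [ge_iff_le, ← mul_div_assoc, div_le_div_iff₀ (ha k) hFk1_pos] at h1
    exact h1
  have h2' : (k:ℝ) * Fbar (k+1) * a k ≤ θ * ((k:ℝ)+1) * a (k+1) * Fbar k := by
    rw [ge_iff_le, ← mul_div_assoc, div_le_div_iff₀ (hFbar_pos k) (ha k)] at h2
    exact h2
  have hBA_F : B * F (k-1) ≤ A * F k := by
    rw [hA_def, hB_def, one_div_mul_eq_div, one_div_mul_eq_div,
      div_le_div_iff₀ hDB_pos hDA_pos]
    have hmul := mul_le_mul_of_nonneg_right h1' (pow_pos hθ k).le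
    have hq1 : q (k+1) = a (k+1) * θ ^ (k+1) := rfl
    have hq2 : q k = a k * θ ^ k := rfl
    rw [hq1, hq2]
    calc F (k-1) * (((k:ℝ)+1) * (a (k+1) * θ^(k+1)))
        = θ * ((k:ℝ)+1) * a (k+1) * F (k-1) * θ^k := by ring
      _ ≤ (k:ℝ) * F k * a k * θ^k := hmul
      _ = F k * ((k:ℝ) * (a k * θ^k)) := by ring
  have hAB_Fbar : A * Fbar (k+1) ≤ B * Fbar k := by
    rw [hA_def, hB_def, one_div_mul_eq_div, one_div_mul_eq_div,
      div_le_div_iff₀ hDA_pos hDB_pos]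
    have hmul := mul_le_mul_of_nonneg_right h2' (pow_pos hθ k).le
    have hq1 : q (k+1) = a (k+1) * θ ^ (k+1) := rfl
    have hq2 : q k = a k * θ ^ k := rfl
    rw [hq1, hq2]
    calc Fbar (k+1) * ((k:ℝ) * (a k * θ^k))
        = (k:ℝ) * Fbar (k+1) * a k * θ^k := by ring
      _ ≤ θ * ((k:ℝ)+1) * a (k+1) * Fbar k * θ^k := hmul
      _ = Fbar k * (((k:ℝ)+1) * (a (k+1) * θ^(k+1))) := by ring
  have hfbk1 : Fbar (k+1) = 1 - F k := by rw [hFbar_eq, hF]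
  have hfk1bar : F (k-1) = 1 - Fbar k := by rw [hFbar_eq k, hFk1_eq]; ring
  have hCA : C ≤ A := by
    rw [hC_def, hfbk1]; nlinarith [hBA_F]
  have hCB : C ≤ B := by
    rw [hC_def, hfk1bar]; nlinarith [hAB_Fbar]
  have hC0 : 0 ≤ C := by
    rw [hC_def]
    have := (hFbar_pos (k+1)).le
    have := hFk1_pos.le
    positivity
  have hV0 : 0 ≤ V := mul_nonneg (hqpos k).le hC0
  -- key identity
  have key : ∀ f : ℕ → ℝ, (∀ n, 0 ≤ f n ∧ f n ≤ 1) →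
      psdSteinSol a θ p f (k+1) - psdSteinSol a θ p f k =
        (C - A) * (∑' j, if k+1 ≤ j then q j * f j else 0)
        + (C - B) * (∑ j ∈ Finset.range k, q j * f j)
        + C * q k * f k := by
    intro f hf
    set μ : ℝ := ∑' i, p i * f i with hμ_def
    have hpf : Summable (fun i => p i * f i) :=
      Summable.of_nonneg_of_le (fun i => mul_nonneg (hppos i).le (hf i).1)
        (fun i => mul_le_of_le_one_right (hppos i).le (hf i).2) hps
    have hqf_sum : HasSum (fun i => q i * f i) (γ * μ) := by
      have h1 := hpf.hasSum.mul_left γ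
      have he : (fun i => γ * (p i * f i)) = fun i => q i * f i := by
        funext i; rw [hp]; field_simp; simp only [hq_def]; ring
      rwa [he] at h1
    have hU : (∑' j, if k+1 ≤ j then q j * f j else 0)
        = γ * μ - ∑ j ∈ Finset.range (k+1), q j * f j :=
      (hasSum_ite_tail _ hqf_sum (k+1)).tsum_eq
    simp only [psdSteinSol]
    rw [if_neg (by omega : ¬(k+1 = 0)), if_neg (by omega : ¬(k = 0))]
    rw [hU]
    push_cast
    rw [mul_assoc ((k:ℝ)+1) (a (k+1)) (θ^(k+1)), mul_assoc (k:ℝ) (a k) (θ^k)]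
    simp only [hqa, ← hμ_def, ← hA_def, ← hB_def]
    rw [Finset.sum_range_succ, Finset.sum_range_succ]
    have hS : ∑ j ∈ Finset.range k, q j * (f j - μ)
        = (∑ j ∈ Finset.range k, q j * f j) - Q * μ := by
      simp only [mul_sub]
      rw [Finset.sum_sub_distrib, ← Finset.sum_mul]
    rw [hS]
    set W : ℝ := ∑ j ∈ Finset.range k, q j * f j with hW_def
    have hFb : Fbar (k+1) = (γ - Q - q k)/γ := by
      rw [eq_div_iff hγne, mul_comm]; exact hQbar
    have hFk : F (k-1) = Q/γ := by
      rw [eq_div_iff hγne, mul_comm]; exact hQγ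
    rw [hC_def, hFb, hFk, hA_def, hB_def]
    have hqk := (hqpos k).ne'
    have hqk1 := (hqpos (k+1)).ne'
    have hkne : (k:ℝ) ≠ 0 := ne_of_gt hkpos
    have hk1ne : ((k:ℝ)+1) ≠ 0 := by positivity
    field_simp
    ring
  -- absolute bound
  have habs : ∀ f : ℕ → ℝ, (∀ n, 0 ≤ f n ∧ f n ≤ 1) →
      |psdSteinSol a θ p f (k+1) - psdSteinSol a θ p f k| ≤ V := by
    intro f hf
    rw [key f hf]
    set U : ℝ := ∑' j, if k+1 ≤ j then q j * f j else 0 with hU_def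
    set W : ℝ := ∑ j ∈ Finset.range k, q j * f j with hW_def
    have hpf : Summable (fun i => p i * f i) :=
      Summable.of_nonneg_of_le (fun i => mul_nonneg (hppos i).le (hf i).1)
        (fun i => mul_le_of_le_one_right (hppos i).le (hf i).2) hps
    have hqf_s : Summable (fun i => q i * f i) :=
      Summable.of_nonneg_of_le (fun i => mul_nonneg (hqpos i).le (hf i).1)
        (fun i => mul_le_of_le_one_right (hqpos i).le (hf i).2) hqs
    have hs1 : Summable (fun j => if k+1 ≤ j then q j * f j else 0) := by
      refine Summable.of_nonneg_of_le (fun j => ?_) (fun j => ?_) hqs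
      · by_cases h : k+1 ≤ j
        · simp only [if_pos h]; exact mul_nonneg (hqpos _).le (hf _).1
        · simp only [if_neg h]; exact le_rfl
      · by_cases h : k+1 ≤ j
        · simp only [if_pos h]; exact mul_le_of_le_one_right (hqpos _).le (hf _).2
        · simp only [if_neg h]; exact (hqpos j).le
    have hs2 : Summable (fun j => if k+1 ≤ j then q j else 0) := by
      refine Summable.of_nonneg_of_le (fun j => ?_) (fun j => ?_) hqs
      · by_cases h : k+1 ≤ j
        · simp only [if_pos h]; exact (hqpos _).le
        · simp only [if_neg h]; exact le_rfl
      · by_cases h : k+1 ≤ j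
        · simp only [if_pos h]; exact le_rfl
        · simp only [if_neg h]; exact (hqpos j).le
    have hU0 : 0 ≤ U := by
      rw [hU_def]
      refine tsum_nonneg (fun j => ?_)
      by_cases h : k+1 ≤ j
      · simp only [if_pos h]; exact mul_nonneg (hqpos _).le (hf _).1
      · simp only [if_neg h]; exact le_rfl
    have htailq : (∑' j, if k+1 ≤ j then q j else 0) = γ * Fbar (k+1) := by
      rw [(hasSum_ite_tail q hq (k+1)).tsum_eq, hQbar, Finset.sum_range_succ]
      ring
    have hUle : U ≤ γ * Fbar (k+1) := by
      rw [← htailq]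
      refine Summable.tsum_le_tsum (fun j => ?_) hs1 hs2
      by_cases h : k+1 ≤ j
      · simp only [if_pos h]; exact mul_le_of_le_one_right (hqpos _).le (hf _).2
      · simp only [if_neg h]; exact le_rfl
    have hW0 : 0 ≤ W :=
      Finset.sum_nonneg fun j _ => mul_nonneg (hqpos _).le (hf _).1
    have hWle : W ≤ γ * F (k-1) := by
      rw [hQγ]
      exact Finset.sum_le_sum fun j _ => mul_le_of_le_one_right (hqpos _).le (hf _).2
    have hCγ : C * γ = A * (γ - Q - q k) + B * Q := by
      rw [hC_def, ← hQbar, ← hQγ]; ring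
    rw [abs_le]
    constructor
    · have e1 : (C - A) * (γ * Fbar (k+1)) ≤ (C - A) * U :=
        mul_le_mul_of_nonpos_left hUle (by linarith)
      have e2 : (C - B) * (γ * F (k-1)) ≤ (C - B) * W :=
        mul_le_mul_of_nonpos_left hWle (by linarith)
      have e3 : 0 ≤ C * q k * f k :=
        mul_nonneg (mul_nonneg hC0 (hqpos k).le) (hf k).1
      have e4 : (C - A) * (γ * Fbar (k+1)) + (C - B) * (γ * F (k-1)) = -V := by
        rw [hQbar, hQγ, hV_def]
        linear_combination hCγ
      linarith
    · have e1 : (C - A) * U ≤ 0 := mul_nonpos_of_nonpos_of_nonneg (by linarith) hU0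
      have e2 : (C - B) * W ≤ 0 := mul_nonpos_of_nonpos_of_nonneg (by linarith) hW0
      have e3 : C * q k * f k ≤ C * q k :=
        mul_le_of_le_one_right (mul_nonneg hC0 (hqpos k).le) (hf k).2
      have e4 : C * q k = V := by rw [hV_def]; ring
      linarith
  -- extremal function
  set δ : ℕ → ℝ := fun n => if n = k then 1 else 0 with hδ_def
  have hδf : ∀ n, 0 ≤ δ n ∧ δ n ≤ 1 := fun n => by
    by_cases h : n = k <;> norm_num [hδ_def, h]
  have hδval : psdSteinSol a θ p δ (k+1) - psdSteinSol a θ p δ k = V := by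
    rw [key δ hδf]
    have hU0 : (∑' j, if k+1 ≤ j then q j * δ j else 0) = 0 := by
      have : (fun j => if k+1 ≤ j then q j * δ j else 0) = fun _ => (0:ℝ) := by
        funext j
        by_cases hj : k+1 ≤ j
        · have hjk : j ≠ k := by omega
          simp [hj, hδ_def, hjk]
        · simp [hj]
      rw [this, tsum_zero]
    have hW0 : (∑ j ∈ Finset.range k, q j * δ j) = 0 := by
      refine Finset.sum_eq_zero fun j hj => ?_
      have hjk : j ≠ k := by have := Finset.mem_range.mp hj; omega
      simp [hδ_def, hjk]
    have hδk : δ k = 1 := by rw [hδ_def]; simp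
    rw [hU0, hW0, hδk, hV_def]
    ring
  -- value identities
  have hqA : q k * A = a k / (θ * ((k:ℝ)+1) * a (k+1)) := by
    have hpos2 : (0:ℝ) < θ * ((k:ℝ)+1) * a (k+1) := mul_pos (mul_pos hθ (by linarith)) (ha (k+1))
    rw [hA_def, mul_one_div, div_eq_div_iff hDA_pos.ne' hpos2.ne']
    have hq1 : q (k+1) = a (k+1) * θ ^ (k+1) := rfl
    have hq2 : q k = a k * θ ^ k := rfl
    rw [hq1, hq2]
    ring
  have hqB : q k * B = 1 / (k:ℝ) := by
    rw [hB_def, mul_one_div, div_eq_div_iff hDB_pos.ne' hkpos.ne']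
    ring
  have hVval : V = a k / (θ * ((k:ℝ)+1) * a (k+1)) * Fbar (k+1) + 1/(k:ℝ) * F (k-1) := by
    rw [hV_def, hC_def, ← hqA, ← hqB]; ring
  -- the supremum
  have hbdd : BddAbove (Set.range fun f : {f : ℕ → ℝ // ∀ n, 0 ≤ f n ∧ f n ≤ 1} =>
      |psdSteinSol a θ p f.1 (k+1) - psdSteinSol a θ p f.1 k|) := by
    refine ⟨V, ?_⟩
    rintro x ⟨f, rfl⟩
    exact habs f.1 f.2
  haveI hne : Nonempty {f : ℕ → ℝ // ∀ n, 0 ≤ f n ∧ f n ≤ 1} :=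
    ⟨⟨fun _ => 0, fun n => by norm_num⟩⟩
  have hsup : (⨆ f : {f : ℕ → ℝ // ∀ n, 0 ≤ f n ∧ f n ≤ 1},
      |psdSteinSol a θ p f.1 (k+1) - psdSteinSol a θ p f.1 k|) = V := by
    apply le_antisymm
    · exact ciSup_le fun f => habs f.1 f.2
    · have hle := le_ciSup hbdd (⟨δ, hδf⟩ : {f : ℕ → ℝ // ∀ n, 0 ≤ f n ∧ f n ≤ 1})
      simpa [hδval, abs_of_nonneg hV0] using hle
  refine ⟨by rw [hsup, hVval], ?_⟩
  rw [hsup]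
  refine le_min ?_ ?_
  · have h := mul_le_mul_of_nonneg_left hCB (hqpos k).le
    rw [hqB] at h
    rw [hV_def]; linarith
  · have h := mul_le_mul_of_nonneg_left hCA (hqpos k).le
    rw [hqA] at h
    rw [hV_def]; linarith
end

section
/- Let X₁,…,X_n be ℤ₊-valued 1-dependent random variables, W_n = Σᵢ Xᵢ, and Z a random variable in the Panjer class (Stein operator (a+bk)g(k+1) - kg(k), b < 1) with E(Z) = E(W_n). Then d_TV(W_n, Z) ≤ (2|1-b| ‖g‖ + ‖Δg‖) Σ_{i=1}^n E(Xᵢ), where ‖g‖ and ‖Δg‖ are uniform bounds on the Stein solution and its forward difference over indicator test functions. -/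
open scoped Classical

open MeasureTheory ProbabilityTheory


private lemma panjer_summable {pZ : ℕ → ℝ} (hZ0 : ∀ k, 0 ≤ pZ k)
    (hsum : Summable pZ) {a b : ℝ} (hb : b < 1)
    (hpanjer : ∀ k : ℕ, (k + 1 : ℝ) * pZ (k + 1) = (a + b * k) * pZ k) :
    Summable (fun k : ℕ => pZ k * k) := by
  set r : ℝ := (max b 0 + 1) / 2 with hr
  have hM1 : max b 0 < 1 := max_lt hb one_pos
  have hMb : b ≤ max b 0 := le_max_left _ _
  have hM0 : (0:ℝ) ≤ max b 0 := le_max_right _ _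
  have hr1 : r < 1 := by rw [hr]; linarith
  have hrb : b < r := by rw [hr]; linarith
  obtain ⟨K, hK⟩ := exists_nat_ge (a / (r - b))
  refine summable_of_ratio_norm_eventually_le hr1 ?_
  filter_upwards [Filter.eventually_ge_atTop K] with k hk
  have hKk : (K : ℝ) ≤ k := Nat.cast_le.mpr hk
  have habk : a + b * k ≤ r * k := by
    have h0 : a ≤ (r - b) * K := by
      rw [div_le_iff₀ (by linarith)] at hK; linarith [hK]
    nlinarith
  have h1 : pZ (k + 1) * ((k + 1 : ℕ) : ℝ) = (a + b * k) * pZ k := by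
    push_cast; linear_combination hpanjer k
  have h2 : (0:ℝ) ≤ pZ k * k := mul_nonneg (hZ0 k) (Nat.cast_nonneg k)
  have h3 : (0:ℝ) ≤ pZ (k+1) * ((k+1 : ℕ) : ℝ) :=
    mul_nonneg (hZ0 _) (Nat.cast_nonneg _)
  rw [Real.norm_eq_abs, Real.norm_eq_abs, abs_of_nonneg h3, abs_of_nonneg h2, h1]
  nlinarith [hZ0 k]

private lemma panjer_mean {pZ : ℕ → ℝ} (hZ0 : ∀ k, 0 ≤ pZ k)
    (hZ1 : HasSum pZ 1) {a b : ℝ} (hb : b < 1)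
    (hpanjer : ∀ k : ℕ, (k + 1 : ℝ) * pZ (k + 1) = (a + b * k) * pZ k) :
    a = (1 - b) * ∑' k : ℕ, pZ k * k := by
  have hs : Summable (fun k : ℕ => pZ k * k) :=
    panjer_summable hZ0 hZ1.summable hb hpanjer
  have h1 : ∑' k : ℕ, pZ k * (k:ℝ) = ∑' k : ℕ, pZ (k + 1) * ((k + 1 : ℕ) : ℝ) := by
    rw [Summable.tsum_eq_zero_add hs]; simp
  have h2 : ∀ k : ℕ, pZ (k + 1) * ((k + 1 : ℕ) : ℝ) = a * pZ k + b * (pZ k * k) := by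
    intro k; push_cast; linear_combination hpanjer k
  have h3 : ∑' k : ℕ, pZ k * (k:ℝ) = a * 1 + b * ∑' k : ℕ, pZ k * (k:ℝ) := by
    have h4 : ∑' k : ℕ, pZ (k + 1) * ((k + 1 : ℕ) : ℝ)
        = a * 1 + b * ∑' k : ℕ, pZ k * (k:ℝ) := by
      simp_rw [h2]
      rw [Summable.tsum_add (hZ1.summable.mul_left a) (hs.mul_left b), tsum_mul_left,
        tsum_mul_left, hZ1.tsum_eq]
    exact h1.trans h4
  linarith

/-- Crude total variation bound for the Panjer-class approximation of a sum of
ℕ-valued 1-dependent random variables: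
`d_TV(W_n, Z) ≤ (2 |1-b| ‖g‖ + ‖Δg‖) ∑ᵢ E Xᵢ`, where `‖g‖` and `‖Δg‖` are
uniform bounds on the Stein solutions for indicator test functions. -/
theorem crude_dtv_bound {Ω : Type*} [MeasurableSpace Ω]
    (μ : Measure Ω) [IsProbabilityMeasure μ] (n : ℕ)
    (X : ℕ → Ω → ℕ) (hmeas : ∀ i, Measurable (X i))
    (hint : ∀ i, Integrable (fun ω => (X i ω : ℝ)) μ)
    (hdep : ∀ i j : ℕ, 1 ≤ i → i + 1 < j →
      Indep (⨆ k ∈ Finset.Icc 1 i, MeasurableSpace.comap (X k) inferInstance)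
            (⨆ k ∈ Set.Ici j, MeasurableSpace.comap (X k) inferInstance) μ)
    (W : Ω → ℕ) (hW : ∀ ω, W ω = ∑ i ∈ Finset.Icc 1 n, X i ω)
    (pZ : ℕ → ℝ) (hZ0 : ∀ k, 0 ≤ pZ k) (hZ1 : HasSum pZ 1)
    (a b : ℝ) (ha : 0 < a) (hb : b < 1)
    (hpanjer : ∀ k : ℕ, (k + 1 : ℝ) * pZ (k + 1) = (a + b * k) * pZ k)
    (hmean : (∑' k : ℕ, pZ k * (k : ℝ)) = ∫ ω, ((W ω : ℝ)) ∂μ)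
    (G Dg : ℝ)
    (hstein : ∀ A : Set ℕ, ∃ gA : ℕ → ℝ,
      (∀ k : ℕ, (a + b * k) * gA (k + 1) - (k : ℝ) * gA k =
        (if k ∈ A then (1 : ℝ) else 0) -
          ∑' j : ℕ, pZ j * (if j ∈ A then (1 : ℝ) else 0)) ∧
      (∀ k, |gA k| ≤ G) ∧ (∀ k, |gA (k + 1) - gA k| ≤ Dg)) :
    (1 / 2) * ∑' k : ℕ, |(μ (W ⁻¹' {k})).toReal - pZ k| ≤
      (2 * |1 - b| * G + Dg) * ∑ i ∈ Finset.Icc 1 n, ∫ ω, (X i ω : ℝ) ∂μ := by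
  classical
  -- basic facts about W
  have hWeq : (fun ω => (W ω : ℝ)) = fun ω => ∑ i ∈ Finset.Icc 1 n, (X i ω : ℝ) := by
    funext ω; rw [hW]; push_cast; ring
  have hWmeas : Measurable W := by
    have h : W = fun ω => ∑ i ∈ Finset.Icc 1 n, X i ω := funext hW
    rw [h]; exact Finset.measurable_sum _ fun i _ => hmeas i
  have hWint : Integrable (fun ω => (W ω : ℝ)) μ := by
    rw [hWeq]; exact integrable_finset_sum _ fun i _ => hint i
  set m : ℝ := ∫ ω, (W ω : ℝ) ∂μ with hmdef
  have hm0 : 0 ≤ m := integral_nonneg fun ω => by positivity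
  have hmsum : m = ∑ i ∈ Finset.Icc 1 n, ∫ ω, (X i ω : ℝ) ∂μ := by
    rw [hmdef, hWeq]; exact integral_finset_sum _ fun i _ => hint i
  have hpsum : Summable pZ := hZ1.summable
  have hma : a = (1 - b) * m := by
    have h := panjer_mean hZ0 hZ1 hb hpanjer
    rwa [hmean] at h
  -- the law of W
  set ν : Measure ℕ := μ.map W with hν
  have hνprob : IsProbabilityMeasure ν := Measure.isProbabilityMeasure_map hWmeas.aemeasurable
  set q : ℕ → ℝ := fun k => (ν {k}).toReal with hqdef
  have hqeq : ∀ k, (μ (W ⁻¹' {k})).toReal = q k := fun k =>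
    congrArg ENNReal.toReal (Measure.map_apply hWmeas (measurableSet_singleton k)).symm
  have hq0 : ∀ k, 0 ≤ q k := fun k => ENNReal.toReal_nonneg
  have hνsing : ∑' k, ν {k} = 1 := by
    rw [← measure_iUnion (fun i j h => by simp [Set.disjoint_left, h])
      (fun k : ℕ => measurableSet_singleton k), Set.iUnion_of_singleton]
    exact measure_univ
  have hqsummable : Summable q := ENNReal.summable_toReal (by rw [hνsing]; simp)
  have hqtsum : ∑' k, q k = 1 := by
    rw [hqdef, ← ENNReal.tsum_toReal_eq fun k => measure_ne_top ν _, hνsing]; simp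
  -- integrability over ν
  have gmeas : ∀ h : ℕ → ℝ, AEStronglyMeasurable h ν := fun h =>
    measurable_from_nat.aestronglyMeasurable
  have hid_int : Integrable (fun k : ℕ => (k : ℝ)) ν := by
    rw [hν, integrable_map_measure (measurable_from_nat (f := fun k : ℕ => (k : ℝ))).aestronglyMeasurable
      hWmeas.aemeasurable]
    exact hWint
  have hid_eq : ∫ k, (k : ℝ) ∂ν = m := by
    rw [hν, integral_map hWmeas.aemeasurable
      (measurable_from_nat (f := fun k : ℕ => (k : ℝ))).aestronglyMeasurable, hmdef]
  -- the Stein data for the optimal set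
  set A : Set ℕ := {k | pZ k ≤ q k} with hA
  obtain ⟨g, hgeq, hgG, hgD⟩ := hstein A
  have hG0 : 0 ≤ G := le_trans (abs_nonneg _) (hgG 0)
  have hD0 : 0 ≤ Dg := le_trans (abs_nonneg _) (hgD 0)
  set f : ℕ → ℝ := fun k => if k ∈ A then 1 else 0 with hf
  set c : ℝ := ∑' j : ℕ, pZ j * (if j ∈ A then (1 : ℝ) else 0) with hc
  -- integrability of the pieces
  have haff_int : Integrable (fun k : ℕ => a + (b - 1) * k) ν :=
    (integrable_const a).add (hid_int.const_mul (b - 1))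
  have hφ1_int : Integrable (fun k : ℕ => (a + (b - 1) * k) * g (k + 1)) ν := by
    have H : (fun k : ℕ => (a + (b - 1) * k) * g (k + 1))
        = fun k : ℕ => g (k + 1) * (a + (b - 1) * k) := funext fun k => mul_comm _ _
    rw [H]
    exact haff_int.bdd_mul (c := G) (gmeas _) (Filter.Eventually.of_forall fun k => by rw [Real.norm_eq_abs]; exact hgG (k + 1))
  have hφ2_int : Integrable (fun k : ℕ => (k : ℝ) * (g (k + 1) - g k)) ν := by
    have H : (fun k : ℕ => (k : ℝ) * (g (k + 1) - g k))
        = fun k : ℕ => (g (k + 1) - g k) * (k : ℝ) := funext fun k => mul_comm _ _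
    rw [H]
    exact hid_int.bdd_mul (c := Dg) (gmeas _) (Filter.Eventually.of_forall fun k => by rw [Real.norm_eq_abs]; exact hgD k)
  have hf_int : Integrable f ν := by
    refine (integrable_const (1 : ℝ)).mono' (gmeas _) (Filter.Eventually.of_forall fun k => ?_)
    rw [hf]; dsimp only; rw [Real.norm_eq_abs]; split_ifs <;> norm_num
  -- pointwise Stein identity
  have hpoint : ∀ k : ℕ,
      (a + (b - 1) * k) * g (k + 1) + (k : ℝ) * (g (k + 1) - g k) = f k - c := by
    intro k
    have h := hgeq k
    have hfk : f k = if k ∈ A then (1 : ℝ) else 0 := rfl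
    rw [hfk, hc]
    linear_combination h
  -- integral identities
  have hEf : ∫ k, f k ∂ν = ∑' k, q k * f k := by
    have h := integral_countable' hf_int
    simpa [hqdef, smul_eq_mul, measureReal_def] using h
  have hint_int : ∫ k, (f k - c) ∂ν = (∑' k, q k * f k) - c := by
    rw [integral_sub hf_int (integrable_const c), hEf, integral_const]; simp
  have hsplit : ∫ k, (f k - c) ∂ν
      = (∫ k, (a + (b - 1) * k) * g (k + 1) ∂ν) + ∫ k, (k : ℝ) * (g (k + 1) - g k) ∂ν := by
    rw [← integral_add hφ1_int hφ2_int]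
    exact integral_congr_ae (Filter.Eventually.of_forall fun k => (hpoint k).symm)
  -- bounds on the two integrals
  have hbound1 : |∫ k, (a + (b - 1) * k) * g (k + 1) ∂ν| ≤ 2 * |1 - b| * G * m := by
    have h1 : |∫ k, (a + (b - 1) * k) * g (k + 1) ∂ν|
        ≤ ∫ k, |(a + (b - 1) * k) * g (k + 1)| ∂ν := by
      simpa only [Real.norm_eq_abs] using
        norm_integral_le_integral_norm (μ := ν) (fun k : ℕ => (a + (b - 1) * k) * g (k + 1))
    refine h1.trans ?_
    have hrhs_int : Integrable (fun k : ℕ => |1 - b| * G * (m + k)) ν :=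
      ((integrable_const m).add hid_int).const_mul (|1 - b| * G)
    have h2 : ∫ k, |(a + (b - 1) * k) * g (k + 1)| ∂ν ≤ ∫ k, |1 - b| * G * (m + k) ∂ν := by
      refine integral_mono hφ1_int.abs hrhs_int fun k => ?_
      have e : a + (b - 1) * k = (1 - b) * (m - k) := by rw [hma]; ring
      have hk0 : (0 : ℝ) ≤ k := Nat.cast_nonneg k
      have habs : |m - (k : ℝ)| ≤ m + k := by rw [abs_le]; constructor <;> linarith
      calc |(a + (b - 1) * k) * g (k + 1)| = |1 - b| * |m - (k : ℝ)| * |g (k + 1)| := by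
            rw [e, abs_mul, abs_mul]
        _ ≤ |1 - b| * (m + k) * G := by
            apply mul_le_mul (mul_le_mul_of_nonneg_left habs (abs_nonneg _)) (hgG (k + 1))
              (abs_nonneg _) (by positivity)
        _ = |1 - b| * G * (m + k) := by ring
    refine h2.trans ?_
    rw [integral_const_mul, integral_add (integrable_const m) hid_int, integral_const, hid_eq]
    simp only [measure_univ, probReal_univ, ENNReal.toReal_one, smul_eq_mul, one_mul]
    nlinarith [abs_nonneg (1 - b)]
  have hbound2 : |∫ k, (k : ℝ) * (g (k + 1) - g k) ∂ν| ≤ Dg * m := by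
    have h1 : |∫ k, (k : ℝ) * (g (k + 1) - g k) ∂ν|
        ≤ ∫ k, |(k : ℝ) * (g (k + 1) - g k)| ∂ν := by
      simpa only [Real.norm_eq_abs] using
        norm_integral_le_integral_norm (μ := ν) (fun k : ℕ => (k : ℝ) * (g (k + 1) - g k))
    refine h1.trans ?_
    have h2 : ∫ k, |(k : ℝ) * (g (k + 1) - g k)| ∂ν ≤ ∫ k, Dg * k ∂ν := by
      refine integral_mono hφ2_int.abs (hid_int.const_mul Dg) fun k => ?_
      have hk0 : (0 : ℝ) ≤ k := Nat.cast_nonneg k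
      calc |(k : ℝ) * (g (k + 1) - g k)| = (k : ℝ) * |g (k + 1) - g k| := by
            rw [abs_mul, abs_of_nonneg hk0]
        _ ≤ (k : ℝ) * Dg := mul_le_mul_of_nonneg_left (hgD k) hk0
        _ = Dg * k := mul_comm _ _
    refine h2.trans ?_
    rw [integral_const_mul, hid_eq]
  -- key Stein bound
  have hkey : (∑' k, q k * f k) - c ≤ (2 * |1 - b| * G + Dg) * m := by
    rw [← hint_int, hsplit]
    calc (∫ k, (a + (b - 1) * k) * g (k + 1) ∂ν) + ∫ k, (k : ℝ) * (g (k + 1) - g k) ∂ν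
        ≤ |∫ k, (a + (b - 1) * k) * g (k + 1) ∂ν| + |∫ k, (k : ℝ) * (g (k + 1) - g k) ∂ν| :=
          add_le_add (le_abs_self _) (le_abs_self _)
      _ ≤ 2 * |1 - b| * G * m + Dg * m := add_le_add hbound1 hbound2
      _ = (2 * |1 - b| * G + Dg) * m := by ring
  -- total variation rewriting
  have hdsum : Summable (fun k => q k - pZ k) := hqsummable.sub hpsum
  have hfq_eq : (fun k => f k * q k) = A.indicator q := by
    funext k; rw [hf]; simp [Set.indicator_apply, ite_mul]
  have hfp_eq : (fun k => f k * pZ k) = A.indicator pZ := by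
    funext k; rw [hf]; simp [Set.indicator_apply, ite_mul]
  have hfq_sum : Summable (fun k => f k * q k) := by rw [hfq_eq]; exact hqsummable.indicator A
  have hfp_sum : Summable (fun k => f k * pZ k) := by rw [hfp_eq]; exact hpsum.indicator A
  have hfd_sum : Summable (fun k => f k * (q k - pZ k)) := by
    have h : (fun k => f k * (q k - pZ k)) = fun k => f k * q k - f k * pZ k :=
      funext fun k => by ring
    rw [h]; exact hfq_sum.sub hfp_sum
  have htsum_d : ∑' k, (q k - pZ k) = 0 := by
    rw [Summable.tsum_sub hqsummable hpsum, hqtsum, hZ1.tsum_eq]; ring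
  have htsum_fd : ∑' k, f k * (q k - pZ k) = (∑' k, q k * f k) - c := by
    have h : ∀ k, f k * (q k - pZ k) = q k * f k - pZ k * f k := fun k => by ring
    have hqf_sum : Summable (fun k => q k * f k) := by
      have : (fun k => q k * f k) = fun k => f k * q k := funext fun k => mul_comm _ _
      rw [this]; exact hfq_sum
    have hpf_sum : Summable (fun k => pZ k * f k) := by
      have : (fun k => pZ k * f k) = fun k => f k * pZ k := funext fun k => mul_comm _ _
      rw [this]; exact hfp_sum
    calc ∑' k, f k * (q k - pZ k) = ∑' k, (q k * f k - pZ k * f k) := tsum_congr h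
      _ = (∑' k, q k * f k) - ∑' k, pZ k * f k := Summable.tsum_sub hqf_sum hpf_sum
      _ = (∑' k, q k * f k) - c := by
          rw [hc]
  have hd : ∀ k, |q k - pZ k| = 2 * (f k * (q k - pZ k)) - (q k - pZ k) := by
    intro k
    by_cases hk : k ∈ A
    · have hpq : pZ k ≤ q k := hk
      have hfk : f k = 1 := by rw [hf]; simp [hk]
      rw [hfk, abs_of_nonneg (by linarith)]; ring
    · have hpq : ¬pZ k ≤ q k := hk
      have hfk : f k = 0 := by rw [hf]; simp [hk]
      rw [hfk, abs_of_neg (by linarith [lt_of_not_ge hpq])]; ring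
  have hLHS : ∑' k, |q k - pZ k| = 2 * ((∑' k, q k * f k) - c) := by
    calc ∑' k, |q k - pZ k| = ∑' k, (2 * (f k * (q k - pZ k)) - (q k - pZ k)) := tsum_congr hd
      _ = (∑' k, 2 * (f k * (q k - pZ k))) - ∑' k, (q k - pZ k) :=
          Summable.tsum_sub (hfd_sum.mul_left 2) hdsum
      _ = 2 * ((∑' k, q k * f k) - c) := by rw [tsum_mul_left, htsum_fd, htsum_d]; ring
  -- conclude
  have hgoal_eq : (fun k : ℕ => |(μ (W ⁻¹' {k})).toReal - pZ k|) = fun k => |q k - pZ k| :=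
    funext fun k => by rw [hqeq]
  rw [hgoal_eq, hLHS, ← hmsum]
  linarith [hkey]
end
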